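/- Let H be a complex Hilbert space with dim H ≥ 3 and let φ : B_s(H) → B_s(H) be a surjective map such that for all A, B, C ∈ B_s(H), A − B ↔_c C if and only if φ(A) − φ(B) ↔_c φ(C). Then for all A, B ∈ B_s(H), A − B ∈ ℝI if and only if φ(A) − φ(B) ∈ ℝI; in particular, if φ(A) = φ(B) then A − B ∈ ℝI. -/
import Mathlib

noncomputable section

variable {H : Type*} [NormedAddCommGroup H] [InnerProductSpace ℂ H] [CompleteSpace H]

/-- `A ↔_c B`: the self-adjoint operators `A` and `B` commute. -/
def CommC (A B : selfAdjoint (H →L[ℂ] H)) : Prop :=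
  (A : H →L[ℂ] H) * (B : H →L[ℂ] H) = (B : H →L[ℂ] H) * (A : H →L[ℂ] H)

local notation "⟪" x ", " y "⟫" => @inner ℂ _ _ x y

/-- rank-one operator `v ↦ ⟪x,v⟫ • x` -/
def rankOne' (x : H) : H →L[ℂ] H := (innerSL ℂ x).smulRight x

lemma rankOne'_apply (x v : H) : rankOne' x v = ⟪x, v⟫ • x := rfl

lemma rankOne'_selfAdjoint (x : H) : IsSelfAdjoint (rankOne' (H := H) x) := by
  rw [ContinuousLinearMap.isSelfAdjoint_iff_isSymmetric]
  intro u v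
  simp only [ContinuousLinearMap.coe_coe, rankOne'_apply, inner_smul_left, inner_smul_right,
    inner_conj_symm]
  ring

lemma eigen_all {f : H →L[ℂ] H} (hf : ∀ x : H, ∃ c : ℂ, f x = c • x)
    {x0 : H} (hx0 : x0 ≠ 0) : ∃ c : ℂ, f = c • 1 := by
  obtain ⟨c0, hc0⟩ := hf x0
  refine ⟨c0, ?_⟩
  ext y
  simp only [ContinuousLinearMap.smul_apply, ContinuousLinearMap.one_apply]
  by_cases hy : y ∈ Submodule.span ℂ {x0}
  · obtain ⟨t, rfl⟩ := Submodule.mem_span_singleton.mp hy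
    rw [map_smul, hc0, smul_comm]
  · obtain ⟨cy, hcy⟩ := hf y
    obtain ⟨c', hc'⟩ := hf (x0 + y)
    rw [map_add, hc0, hcy, smul_add] at hc'
    have key : (cy - c') • y = (c' - c0) • x0 := by
      rw [sub_smul, sub_smul]
      linear_combination (norm := abel) hc'
    have hcyc' : cy = c' := by
      by_contra hne
      apply hy
      have hrw : y = (cy - c')⁻¹ • ((c' - c0) • x0) := by
        rw [← key, smul_smul, inv_mul_cancel₀ (sub_ne_zero.mpr hne), one_smul]
      rw [hrw]
      exact Submodule.smul_mem _ _ (Submodule.smul_mem _ _ (Submodule.mem_span_singleton_self x0))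
    have hzero : (c' - c0) • x0 = 0 := by rw [← key, hcyc', sub_self, zero_smul]
    have hc0c' : c' = c0 := sub_eq_zero.mp ((smul_eq_zero.mp hzero).resolve_right hx0)
    rw [hcy, hcyc', hc0c']

/-- A self-adjoint operator commutes with every self-adjoint operator iff it is
a real scalar multiple of the identity (given a nonzero vector). -/
lemma central_iff {x0 : H} (hx0 : x0 ≠ 0) (a : selfAdjoint (H →L[ℂ] H)) :
    (∀ C : selfAdjoint (H →L[ℂ] H), CommC a C) ↔
      ∃ r : ℝ, (a : H →L[ℂ] H) = (r : ℂ) • 1 := by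
  constructor
  · intro h
    have hf : ∀ x : H, ∃ c : ℂ, (a : H →L[ℂ] H) x = c • x := by
      intro x
      by_cases hx : x = 0
      · exact ⟨0, by simp [hx]⟩
      · have hcomm := h ⟨rankOne' x, rankOne'_selfAdjoint x⟩
        have := congrArg (fun T : H →L[ℂ] H => T x) hcomm
        simp only [ContinuousLinearMap.mul_apply] at this
        rw [rankOne'_apply, map_smul, rankOne'_apply] at this
        refine ⟨⟪x, (a : H →L[ℂ] H) x⟫ / ⟪x, x⟫, ?_⟩
        have hxx : ⟪x, x⟫ ≠ 0 := fun hc => hx (inner_self_eq_zero.mp hc)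
        rw [div_eq_inv_mul, mul_smul, ← this, inv_smul_smul₀ hxx]
    obtain ⟨c, hc⟩ := eigen_all hf hx0
    -- c is real since a is self-adjoint
    have hsa : IsSelfAdjoint (a : H →L[ℂ] H) := a.2
    have hadj : (starRingEnd ℂ) c • (1 : H →L[ℂ] H) = c • 1 := by
      have := hsa
      rw [IsSelfAdjoint, hc] at this
      rw [star_smul] at this
      simpa using this
    have hcc : (starRingEnd ℂ) c = c := by
      have := congrArg (fun T : H →L[ℂ] H => T x0) hadj
      simp only [ContinuousLinearMap.smul_apply, ContinuousLinearMap.one_apply] at this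
      exact smul_left_injective ℂ hx0 this
    refine ⟨c.re, ?_⟩
    rw [hc, Complex.conj_eq_iff_re.mp hcc]
  · rintro ⟨r, hr⟩ C
    unfold CommC
    rw [hr]
    rw [smul_mul_assoc, mul_smul_comm, one_mul, mul_one]

theorem stmt14
    (hdim : 3 ≤ Module.rank ℂ H)
    (φ : selfAdjoint (H →L[ℂ] H) → selfAdjoint (H →L[ℂ] H))
    (hsurj : Function.Surjective φ)
    (hpres : ∀ A B C : selfAdjoint (H →L[ℂ] H),
      CommC (A - B) C ↔ CommC (φ A - φ B) (φ C)) :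
    ∀ A B : selfAdjoint (H →L[ℂ] H),
      ((∃ r : ℝ, ((A - B : selfAdjoint (H →L[ℂ] H)) : H →L[ℂ] H) = (r : ℂ) • 1) ↔
       (∃ r : ℝ, ((φ A - φ B : selfAdjoint (H →L[ℂ] H)) : H →L[ℂ] H) = (r : ℂ) • 1)) ∧
      (φ A = φ B →
        ∃ r : ℝ, ((A - B : selfAdjoint (H →L[ℂ] H)) : H →L[ℂ] H) = (r : ℂ) • 1) := by
  obtain ⟨x0, hx0⟩ : ∃ x : H, x ≠ 0 := by
    rw [← rank_pos_iff_exists_ne_zero (R := ℂ)]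
    calc (0 : Cardinal) < 3 := by norm_num
      _ ≤ Module.rank ℂ H := hdim
  intro A B
  have main : ∀ A B : selfAdjoint (H →L[ℂ] H),
      (∃ r : ℝ, ((A - B : selfAdjoint (H →L[ℂ] H)) : H →L[ℂ] H) = (r : ℂ) • 1) ↔
      (∃ r : ℝ, ((φ A - φ B : selfAdjoint (H →L[ℂ] H)) : H →L[ℂ] H) = (r : ℂ) • 1) := by
    intro A B
    rw [← central_iff hx0, ← central_iff hx0]
    constructor
    · intro h C
      obtain ⟨C', rfl⟩ := hsurj C
      exact (hpres A B C').mp (h C')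
    · intro h C
      exact (hpres A B C).mpr (h (φ C))
  refine ⟨main A B, fun hAB => ?_⟩
  exact (main A B).mpr ⟨0, by rw [hAB, sub_self]; simp⟩
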